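/- An object V of S is indecomposable (nonzero and not expressible as the direct sum of two nonzero subobjects) if and only if V ≅ S_{a,b} for some a ∈ ℤ ∪ {−∞} and b ∈ ℤ ∪ {∞} with a ≤ b; and V is completely decomposable (a coproduct of indecomposable objects) if and only if V is isomorphic to a coproduct of objects of the form S_{a,b}. -/

import Mathlib

open CategoryTheory CategoryTheory.Limits

set_option linter.unusedVariables false

/-- The category `S` of sequences of `k`-vector spaces: functors from `ℤ`
(viewed as a poset category) to `k`-vector spaces. -/
abbrev SeqCat (k : Type) [Field k] := ℤ ⥤ ModuleCat k

variable {k : Type} [Field k]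

/-- The transition map `d_V^i : V^i ⟶ V^{i+1}` of a sequence `V`. -/
noncomputable def SeqCat.d (V : SeqCat k) (i : ℤ) : V.obj i ⟶ V.obj (i + 1) :=
  V.map (homOfLE (by omega))

variable (k)

/-- The component in degree `i` of the sequence `S_{a,b}` (for `a ∈ ℤ ∪ {−∞}`,
`b ∈ ℤ ∪ {∞}`), as a submodule of `k`: it is all of `k` if `a ≤ i ≤ b` and `0`
otherwise. -/
noncomputable def SabObj (a : WithBot ℤ) (b : WithTop ℤ) (i : ℤ) : Submodule k k :=
  if a ≤ (i : WithBot ℤ) ∧ (i : WithTop ℤ) ≤ b then ⊤ else ⊥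

lemma SabObj_coe_eq_zero {a : WithBot ℤ} {b : WithTop ℤ} {i : ℤ}
    (h : ¬ (a ≤ (i : WithBot ℤ) ∧ (i : WithTop ℤ) ≤ b)) (x : ↥(SabObj k a b i)) :
    (x : k) = 0 := by
  have hm := x.2
  have he : SabObj k a b i = ⊥ := if_neg h
  exact (Submodule.eq_bot_iff _).1 he _ hm

/-- The transition maps of the sequence `S_{a,b}`: the map from degree `i` to degree `j`
is multiplication by `∏_{m=i}^{j-1} (-1)^m`, i.e. the composite of the maps
`(-1)^m · id` for `i ≤ m < j` (and it is zero when forced to be, i.e. when the target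
component vanishes). -/
noncomputable def SabMap (a : WithBot ℤ) (b : WithTop ℤ) (i j : ℤ) :
    ↥(SabObj k a b i) →ₗ[k] ↥(SabObj k a b j) where
  toFun x := if h : a ≤ (j : WithBot ℤ) ∧ (j : WithTop ℤ) ≤ b then
      ⟨(∏ m ∈ Finset.Ico i j, (-1 : k) ^ m) * (x : k), by
        rw [SabObj, if_pos h]; trivial⟩
    else 0
  map_add' x y := by
    by_cases h : a ≤ (j : WithBot ℤ) ∧ (j : WithTop ℤ) ≤ b
    · simp only [dif_pos h]
      ext
      push_cast
      ring
    · simp only [dif_neg h, add_zero]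
  map_smul' c x := by
    by_cases h : a ≤ (j : WithBot ℤ) ∧ (j : WithTop ℤ) ≤ b
    · simp only [dif_pos h, RingHom.id_apply]
      ext
      simp [smul_eq_mul]
      ring
    · simp only [dif_neg h, smul_zero, RingHom.id_apply]

lemma SabMap_id (a : WithBot ℤ) (b : WithTop ℤ) (i : ℤ) :
    SabMap k a b i i = LinearMap.id := by
  apply LinearMap.ext
  intro x
  by_cases h : a ≤ (i : WithBot ℤ) ∧ (i : WithTop ℤ) ≤ b
  · apply Subtype.ext
    simp [SabMap, h]
  · apply Subtype.ext
    simp [SabMap, h, SabObj_coe_eq_zero k h x]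

lemma SabMap_comp (a : WithBot ℤ) (b : WithTop ℤ) {i j l : ℤ}
    (hij : i ≤ j) (hjl : j ≤ l) :
    (SabMap k a b j l).comp (SabMap k a b i j) = SabMap k a b i l := by
  apply LinearMap.ext
  intro x
  by_cases hl : a ≤ (l : WithBot ℤ) ∧ (l : WithTop ℤ) ≤ b
  · by_cases hj : a ≤ (j : WithBot ℤ) ∧ (j : WithTop ℤ) ≤ b
    · apply Subtype.ext
      simp only [LinearMap.comp_apply, SabMap, LinearMap.coe_mk, AddHom.coe_mk,
        dif_pos hl, dif_pos hj]
      have key : (∏ m ∈ Finset.Ico i j, (-1 : k) ^ m) * (∏ m ∈ Finset.Ico j l, (-1 : k) ^ m)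
          = ∏ m ∈ Finset.Ico i l, (-1 : k) ^ m := by
        rw [← Finset.prod_union (Finset.Ico_disjoint_Ico_consecutive i j l),
          Finset.Ico_union_Ico_eq_Ico hij hjl]
      rw [← key]
      ring
    · have hi : ¬ (a ≤ (i : WithBot ℤ) ∧ (i : WithTop ℤ) ≤ b) := by
        intro hi
        exact hj ⟨le_trans hi.1 (by exact_mod_cast hij),
          le_trans (by exact_mod_cast hjl) hl.2⟩
      apply Subtype.ext
      simp [SabMap, hl, hj, SabObj_coe_eq_zero k hi x]
  · apply Subtype.ext
    simp [SabMap, hl]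

/-- The sequence `S_{a,b}` for `a ∈ ℤ ∪ {−∞}` and `b ∈ ℤ ∪ {∞}`: its component in
degree `i` is `k` for `a ≤ i ≤ b` and `0` otherwise, and the transition map in degree
`i` (within the interval) is `(-1)^i · id_k`. -/
noncomputable def Sab (a : WithBot ℤ) (b : WithTop ℤ) : SeqCat k where
  obj i := ModuleCat.of k (SabObj k a b i)
  map {i j} f := ModuleCat.ofHom (SabMap k a b i j)
  map_id i := by
    ext1
    simp only [ModuleCat.hom_ofHom, ModuleCat.hom_id]
    exact SabMap_id k a b i
  map_comp {i j l} f g := by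
    ext1
    simp only [ModuleCat.hom_comp, ModuleCat.hom_ofHom]
    exact (SabMap_comp k a b (leOfHom f) (leOfHom g)).symm

/-- The condition `a ≤ b` for `a ∈ ℤ ∪ {−∞}` and `b ∈ ℤ ∪ {∞}`: the interval `[a,b]`
contains some integer. -/
def SabLE (a : WithBot ℤ) (b : WithTop ℤ) : Prop :=
  ∃ i : ℤ, a ≤ (i : WithBot ℤ) ∧ (i : WithTop ℤ) ≤ b

/-- A nonzero object of an additive category is indecomposable if it is not (isomorphic
to) a coproduct of two non-zero objects. -/
def IndecomposableSeq (V : SeqCat k) : Prop :=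
  ¬ IsZero V ∧ ∀ A B : SeqCat k, Nonempty (V ≅ A ⨿ B) → IsZero A ∨ IsZero B

/-- An object is completely decomposable if it is (isomorphic to) a coproduct of
indecomposable objects. -/
def CompletelyDecomposableSeq (V : SeqCat k) : Prop :=
  ∃ (ι : Type) (W : ι → SeqCat k),
    (∀ j, IndecomposableSeq k (W j)) ∧ Nonempty (V ≅ ∐ W)


section IntervalHelpers
-- ===== helper lemmas (k implicit here) =====
variable {k}


section Helpers

/-- upward induction on integers, two-index form -/
lemma int_induction_up (P : ℤ → ℤ → Prop) (refl : ∀ i, P i i)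
    (step : ∀ i j, i ≤ j → P i j → P i (j + 1)) : ∀ i j, i ≤ j → P i j := by
  intro i j h
  obtain ⟨n, rfl⟩ := Int.le.dest h
  clear h
  induction n with
  | zero => simpa using refl i
  | succ n ih =>
      have e : i + ((n : ℤ) + 1) = (i + n) + 1 := by ring
      rw [show ((n+1 : ℕ) : ℤ) = (n : ℤ) + 1 by push_cast; ring, e]
      exact step i (i + n) (by omega) ih

/-- exists greatest point above a failure -/
lemma exists_greatest_below (P : ℤ → Prop) (b i₀ : ℤ) (hi : i₀ ≤ b) (hb : P b)
    (h0 : ¬ P i₀) : ∃ a, i₀ < a ∧ a ≤ b ∧ P a ∧ ¬ P (a - 1) := by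
  have hex : ∃ n : ℕ, ¬ P (b - n) := by
    refine ⟨(b - i₀).toNat, ?_⟩
    rw [show b - ((b - i₀).toNat : ℤ) = i₀ by omega]
    exact h0
  classical
  let n₀ := Nat.find hex
  have hn₀ : ¬ P (b - n₀) := Nat.find_spec hex
  have hpos : 0 < n₀ := by
    rcases Nat.eq_zero_or_pos n₀ with h | h
    · exfalso; apply hn₀; rw [h]; simpa using hb
    · exact h
  have hlt : ¬ ¬ P (b - (n₀ - 1 : ℕ)) := Nat.find_min hex (by omega)
  refine ⟨b - n₀ + 1, ?_, by omega, ?_, ?_⟩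
  · by_contra hcon
    push_neg at hcon
    have : ¬ P (b - ((b - i₀).toNat : ℤ)) := by
      rw [show b - ((b - i₀).toNat : ℤ) = i₀ by omega]; exact h0
    have hle : (b - i₀).toNat < n₀ := by omega
    exact Nat.find_min hex hle this
  · have := not_not.1 hlt
    rwa [show b - ((n₀ - 1 : ℕ) : ℤ) = b - n₀ + 1 by omega] at this
  · rwa [show b - (n₀ : ℤ) + 1 - 1 = b - n₀ by ring]

lemma map_map (V : SeqCat k) {i j l : ℤ} (h1 : i ≤ j) (h2 : j ≤ l) (v : V.obj i) :
    V.map (homOfLE h2) (V.map (homOfLE h1) v) = V.map (homOfLE (h1.trans h2)) v := by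
  rw [← homOfLE_comp h1 h2, V.map_comp]
  rfl

lemma map_self (V : SeqCat k) {i : ℤ} (h : i ≤ i) (v : V.obj i) :
    V.map (homOfLE h) v = v := by
  rw [show homOfLE h = 𝟙 i from rfl, V.map_id]
  rfl

/-- injectivity of composites -/
lemma map_injective (V : SeqCat k)
    (h : ∀ i j : ℤ, (e : i + 1 = j) → Function.Injective (V.map (homOfLE (by omega : i ≤ j)))) :
    ∀ i j : ℤ, ∀ hij : i ≤ j, Function.Injective (V.map (homOfLE hij)) := by
  intro i j hij
  refine int_induction_up (fun i j => ∀ hij : i ≤ j, Function.Injective (V.map (homOfLE hij)))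
    (fun i h' => ?_) (fun i j hij ih h' => ?_) i j hij hij
  · intro u v huv
    rwa [map_self V h' u, map_self V h' v] at huv
  · intro u v huv
    refine ih hij (h j (j+1) rfl ?_)
    rw [map_map V hij (by omega), map_map V hij (by omega)]
    exact huv

lemma map_surjective (V : SeqCat k)
    (h : ∀ i j : ℤ, (e : i + 1 = j) → Function.Surjective (V.map (homOfLE (by omega : i ≤ j)))) :
    ∀ i j : ℤ, ∀ hij : i ≤ j, Function.Surjective (V.map (homOfLE hij)) := by
  intro i j hij
  refine int_induction_up (fun i j => ∀ hij : i ≤ j, Function.Surjective (V.map (homOfLE hij)))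
    (fun i h' v => ⟨v, map_self V h' v⟩) (fun i j hij ih h' v => ?_) i j hij hij
  obtain ⟨u, hu⟩ := h j (j+1) rfl v
  obtain ⟨w, hw⟩ := ih hij u
  exact ⟨w, by rw [← map_map V hij (by omega), hw, hu]⟩

/-- make a natural transformation from stepwise data -/
def mkHom (V W : SeqCat k) (f : ∀ j : ℤ, V.obj j ⟶ W.obj j)
    (hf : ∀ i j : ℤ, (h : i + 1 = j) → ∀ v : V.obj i,
      f j (V.map (homOfLE (by omega : i ≤ j)) v) = W.map (homOfLE (by omega : i ≤ j)) (f i v)) :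
    V ⟶ W where
  app j := f j
  naturality i j g := by
    have hle : i ≤ j := leOfHom g
    have key : ∀ p q : ℤ, p ≤ q → ∀ hpq : p ≤ q, ∀ v : V.obj p,
        f q (V.map (homOfLE hpq) v) = W.map (homOfLE hpq) (f p v) := by
      refine int_induction_up _ (fun p hpp v => ?_) (fun p q hpq ih hpq1 v => ?_)
      · rw [map_self V hpp, map_self W hpp]
      · rw [← map_map V hpq (by omega), hf q (q+1) rfl, ih hpq, map_map W hpq]
    have : g = homOfLE hle := rfl
    rw [this]
    ext v
    exact key i j hle hle v

end Helpers



section Chain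

variable {F : ℤ → Type} 

private def trF {F : ℤ → Type} {i j : ℤ} (h : i = j) (v : F i) : F j := h ▸ v

private lemma trF_mem {T : ∀ j : ℤ, Set (F j)} {i j : ℤ} (h : i = j) {v : F i}
    (hv : v ∈ T i) : trF h v ∈ T j := by subst h; exact hv

private lemma trF_rel {R : ∀ i j : ℤ, F i → F j → Prop} {i i' j j' : ℤ}
    (h : i = j) (h' : i' = j') {v : F i} {v' : F i'} (hr : R i i' v v') :
    R j j' (trF h v) (trF h' v') := by subst h; subst h'; exact hr

/-- downward dependent choice on ℤ -/
lemma exists_chain_down (F : ℤ → Type) (d : ∀ j : ℤ, F j) (b : ℤ)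
    (T : ∀ j : ℤ, Set (F j)) (R : ∀ i j : ℤ, F i → F j → Prop)
    (v₀ : F b) (h₀ : v₀ ∈ T b)
    (step : ∀ j : ℤ, j ≤ b → ∀ v ∈ T j, ∃ u ∈ T (j - 1), R (j - 1) j u v) :
    ∃ x : ∀ j : ℤ, F j, x b = v₀ ∧ (∀ j, j ≤ b → x j ∈ T j) ∧
      (∀ i j : ℤ, i + 1 = j → j ≤ b → R i j (x i) (x j)) := by
  classical
  -- the chain, as a sequence of pairs
  let c : ℕ → Σ j : ℤ, {v : F j // v ∈ T j} := fun n => Nat.rec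
    (⟨b, v₀, h₀⟩ : Σ j : ℤ, {v : F j // v ∈ T j})
    (fun n p => if h : p.1 ≤ b then
        ⟨p.1 - 1, (step p.1 h p.2.1 p.2.2).choose,
          (step p.1 h p.2.1 p.2.2).choose_spec.1⟩
      else p) n
  have hc0 : c 0 = ⟨b, v₀, h₀⟩ := rfl
  have hcsucc : ∀ n : ℕ, c (n+1) = if h : (c n).1 ≤ b then
      (⟨(c n).1 - 1, (step (c n).1 h (c n).2.1 (c n).2.2).choose,
        (step (c n).1 h (c n).2.1 (c n).2.2).choose_spec.1⟩ : Σ j : ℤ, {v : F j // v ∈ T j})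
      else c n := fun n => rfl
  have key : ∀ n : ℕ, (c n).1 = b - n := by
    intro n
    induction n with
    | zero => rw [hc0]; simp
    | succ n ih =>
        have hle : (c n).1 ≤ b := by omega
        rw [hcsucc n, dif_pos hle]
        push_cast
        omega
  have link : ∀ n : ℕ, R ((c (n+1)).1) ((c n).1) ((c (n+1)).2.1) ((c n).2.1) := by
    intro n
    have hle : (c n).1 ≤ b := by have := key n; omega
    rw [hcsucc n, dif_pos hle]
    exact (step (c n).1 hle (c n).2.1 (c n).2.2).choose_spec.2
  -- assemble
  let get : ℕ → ∀ j : ℤ, F j := fun n j => if h : (c n).1 = j then trF h (c n).2.1 else d j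
  refine ⟨fun j => get (b - j).toNat j, ?_, ?_, ?_⟩
  · show get (b - b).toNat b = v₀
    rw [show (b - b).toNat = 0 by omega]
    show dite _ _ _ = v₀
    rw [dif_pos (by rw [hc0])]
    have h : (c 0).1 = b := by rw [hc0]
    rfl
  · intro j hj
    have h : (c (b - j).toNat).1 = j := by have := key (b - j).toNat; omega
    show get (b - j).toNat j ∈ T j
    show dite _ _ _ ∈ T j
    rw [dif_pos h]
    exact trF_mem h (c (b - j).toNat).2.2
  · intro i j hij hjb
    have hn : (b - i).toNat = (b - j).toNat + 1 := by omega
    have hi : (c ((b - j).toNat + 1)).1 = i := by have := key ((b - j).toNat + 1); push_cast at this; omega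
    have hj : (c ((b - j).toNat)).1 = j := by have := key ((b - j).toNat); omega
    show R i j (get (b - i).toNat i) (get (b - j).toNat j)
    rw [hn]
    show R i j (dite _ _ _) (dite _ _ _)
    rw [dif_pos hi, dif_pos hj]
    exact trF_rel hi hj (link ((b - j).toNat))

end Chain

section Functional

/-- separating functional -/
lemma exists_functional {M : Type} [AddCommGroup M] [Module k M]
    (S : Submodule k M) (y : M) (hy : y ∉ S) :
    ∃ φ : M →ₗ[k] k, φ y = 1 ∧ ∀ s ∈ S, φ s = 0 := by
  classical
  set Q := M ⧸ S
  set ybar : Q := Submodule.Quotient.mk y with hybar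
  have hy0 : ybar ≠ 0 := by
    rw [hybar, Ne, Submodule.Quotient.mk_eq_zero]
    exact hy
  obtain ⟨q, hq⟩ := Submodule.exists_isCompl (Submodule.span k {ybar})
  set π := (Submodule.span k {ybar}).linearProjOfIsCompl q hq
  set e := LinearEquiv.toSpanNonzeroSingleton k Q ybar hy0
  refine ⟨(e.symm.toLinearMap.comp π).comp S.mkQ, ?_, ?_⟩
  · have h1 : (S.mkQ) y = ybar := rfl
    have h2 : π ybar = ⟨ybar, Submodule.mem_span_singleton_self ybar⟩ := by
      have := Submodule.linearProjOfIsCompl_apply_left hq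
        (⟨ybar, Submodule.mem_span_singleton_self ybar⟩ : Submodule.span k {ybar})
      exact this
    have h3 : e 1 = ⟨ybar, Submodule.mem_span_singleton_self ybar⟩ := by
      apply Subtype.ext
      simp [e, LinearEquiv.toSpanNonzeroSingleton]
    simp only [LinearMap.comp_apply, h1, h2, ← h3]
    simp
  · intro s hs
    have h1 : (S.mkQ) s = 0 := by simpa [Submodule.Quotient.mk_eq_zero] using hs
    simp [LinearMap.comp_apply, h1]

end Functional


end IntervalHelpers

section Part2
section Sign

/-- the sign `(-1)^(j(j-1)/2)` -/
def sgn (j : ℤ) : k := if j % 4 = 0 ∨ j % 4 = 1 then 1 else -1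

variable {k}

lemma sgn_mul_self (j : ℤ) : sgn k j * sgn k j = 1 := by
  unfold sgn
  by_cases h : j % 4 = 0 ∨ j % 4 = 1
  · rw [if_pos h]; ring
  · rw [if_neg h]; ring

lemma neg_one_zpow_mul_self (j : ℤ) : (-1 : k) ^ j * (-1 : k) ^ j = 1 := by
  rcases Int.even_or_odd j with he | ho
  · rw [Even.neg_one_zpow he]; ring
  · rw [Odd.neg_one_zpow ho]; ring

lemma sgn_succ (j : ℤ) : sgn k (j + 1) = (-1 : k) ^ j * sgn k j := by
  have h4 : j % 4 = 0 ∨ j % 4 = 1 ∨ j % 4 = 2 ∨ j % 4 = 3 := by omega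
  rcases Int.even_or_odd j with he | ho
  · have h2 : j % 2 = 0 := Int.even_iff.1 he
    rw [Even.neg_one_zpow he, one_mul]
    unfold sgn
    rcases h4 with h | h | h | h
    · rw [if_pos (by omega : (j+1) % 4 = 0 ∨ (j+1) % 4 = 1), if_pos (by omega : j % 4 = 0 ∨ j % 4 = 1)]
    · omega
    · rw [if_neg (by omega : ¬((j+1) % 4 = 0 ∨ (j+1) % 4 = 1)), if_neg (by omega : ¬(j % 4 = 0 ∨ j % 4 = 1))]
    · omega
  · have h2 : j % 2 = 1 := Int.odd_iff.1 ho
    rw [Odd.neg_one_zpow ho]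
    unfold sgn
    rcases h4 with h | h | h | h
    · omega
    · rw [if_neg (by omega : ¬((j+1) % 4 = 0 ∨ (j+1) % 4 = 1)), if_pos (by omega : j % 4 = 0 ∨ j % 4 = 1)]
      ring
    · omega
    · rw [if_pos (by omega : (j+1) % 4 = 0 ∨ (j+1) % 4 = 1), if_neg (by omega : ¬(j % 4 = 0 ∨ j % 4 = 1))]
      ring

lemma neg_one_zpow_mul_sgn_succ (j : ℤ) : (-1 : k) ^ j * sgn k (j + 1) = sgn k j := by
  rw [sgn_succ, ← mul_assoc, neg_one_zpow_mul_self, one_mul]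

end Sign

section SabLemmas

variable {k}

/-- membership condition for the interval -/
def SabIn (a : WithBot ℤ) (b : WithTop ℤ) (i : ℤ) : Prop :=
  a ≤ (i : WithBot ℤ) ∧ (i : WithTop ℤ) ≤ b

lemma sabIn_convex {a : WithBot ℤ} {b : WithTop ℤ} {i j m : ℤ}
    (hi : SabIn a b i) (hj : SabIn a b j) (him : i ≤ m) (hmj : m ≤ j) : SabIn a b m :=
  ⟨le_trans hi.1 (by exact_mod_cast him), le_trans (by exact_mod_cast hmj) hj.2⟩

lemma sabObj_eq_top {a : WithBot ℤ} {b : WithTop ℤ} {i : ℤ} (h : SabIn a b i) :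
    SabObj k a b i = ⊤ := if_pos h

/-- an arbitrary element of an interval component -/
def sabElt {a : WithBot ℤ} {b : WithTop ℤ} {i : ℤ} (h : SabIn a b i) (c : k) :
    ↥(SabObj k a b i) := ⟨c, by rw [sabObj_eq_top h]; trivial⟩

@[simp] lemma sabElt_coe {a : WithBot ℤ} {b : WithTop ℤ} {i : ℤ} (h : SabIn a b i) (c : k) :
    ((sabElt h c : ↥(SabObj k a b i)) : k) = c := rfl

lemma sabElt_eq_iff {a : WithBot ℤ} {b : WithTop ℤ} {i : ℤ}
    (x y : ↥(SabObj k a b i)) : x = y ↔ (x : k) = (y : k) :=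
  ⟨fun h => by rw [h], fun h => Subtype.ext h⟩

lemma prod_neg_one_Ico_step (i : ℤ) : (∏ m ∈ Finset.Ico i (i + 1), (-1 : k) ^ m) = (-1 : k) ^ i := by
  rw [show Finset.Ico i (i + 1) = {i} by ext x; simp [Finset.mem_Ico]; omega, Finset.prod_singleton]

lemma Sab_map_eq {a : WithBot ℤ} {b : WithTop ℤ} {i j : ℤ} (h : i ≤ j) :
    (Sab k a b).map (homOfLE h) = ModuleCat.ofHom (SabMap k a b i j) := rfl

/-- the one-step transition map of `Sab`, on coordinates -/
lemma SabMap_step_coe {a : WithBot ℤ} {b : WithTop ℤ} {i j : ℤ} (hij : i + 1 = j)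
    (h : SabIn a b j) (v : ↥(SabObj k a b i)) :
    ((SabMap k a b i j v : ↥(SabObj k a b j)) : k) = (-1 : k) ^ i * (v : k) := by
  subst hij
  have h' : a ≤ ((i + 1 : ℤ) : WithBot ℤ) ∧ ((i + 1 : ℤ) : WithTop ℤ) ≤ b := h
  unfold SabMap
  rw [LinearMap.coe_mk, AddHom.coe_mk, dif_pos h']
  simp [prod_neg_one_Ico_step]

lemma SabMap_neg {a : WithBot ℤ} {b : WithTop ℤ} {i j : ℤ}
    (h : ¬ SabIn a b j) (v : ↥(SabObj k a b i)) :
    SabMap k a b i j v = 0 := by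
  have h' : ¬ (a ≤ (j : WithBot ℤ) ∧ (j : WithTop ℤ) ≤ b) := h
  unfold SabMap
  rw [LinearMap.coe_mk, AddHom.coe_mk, dif_neg h']

end SabLemmas

section Summand

open scoped Classical

variable {k}

/-- data describing an interval direct summand of `V` -/
structure IntervalData (V : SeqCat k) (a : WithBot ℤ) (b : WithTop ℤ) where
  x : ∀ j : ℤ, V.obj j
  lam : ∀ j : ℤ, V.obj j →ₗ[k] k
  hx1 : ∀ i j : ℤ, (h : i + 1 = j) → SabIn a b i → SabIn a b j →
    V.map (homOfLE (by omega : i ≤ j)) (x i) = x j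
  hx2 : ∀ i j : ℤ, (h : i + 1 = j) → SabIn a b i → ¬ SabIn a b j →
    V.map (homOfLE (by omega : i ≤ j)) (x i) = 0
  hl1 : ∀ j : ℤ, SabIn a b j → lam j (x j) = 1
  hl2 : ∀ i j : ℤ, (h : i + 1 = j) → SabIn a b i → SabIn a b j →
    ∀ v : V.obj i, lam j (V.map (homOfLE (by omega : i ≤ j)) v) = lam i v
  hl3 : ∀ i j : ℤ, (h : i + 1 = j) → ¬ SabIn a b i → SabIn a b j →
    ∀ v : V.obj i, lam j (V.map (homOfLE (by omega : i ≤ j)) v) = 0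

variable {V : SeqCat k} {a : WithBot ℤ} {b : WithTop ℤ}

/-- the components of the inclusion of the interval summand -/
noncomputable def sApp (D : IntervalData V a b) (j : ℤ) :
    ↥(SabObj k a b j) →ₗ[k] V.obj j where
  toFun v := ((v : k) * sgn k j) • (if SabIn a b j then D.x j else 0)
  map_add' v w := by
    push_cast
    rw [add_mul, add_smul]
  map_smul' c v := by
    push_cast
    simp only [RingHom.id_apply, id_eq, smul_eq_mul, mul_assoc, mul_smul]

lemma sApp_apply (D : IntervalData V a b) (j : ℤ) (v : ↥(SabObj k a b j)) :
    sApp D j v = ((v : k) * sgn k j) • (if SabIn a b j then D.x j else 0) := rfl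

/-- the components of the projection onto the interval summand -/
noncomputable def rApp (D : IntervalData V a b) (j : ℤ) :
    V.obj j →ₗ[k] ↥(SabObj k a b j) where
  toFun v := if h : SabIn a b j then sabElt h (sgn k j * D.lam j v) else 0
  map_add' v w := by
    by_cases h : SabIn a b j
    · simp only [dif_pos h]
      apply Subtype.ext
      simp [mul_add]
    · simp only [dif_neg h, add_zero]
  map_smul' c v := by
    by_cases h : SabIn a b j
    · simp only [dif_pos h, RingHom.id_apply]
      apply Subtype.ext
      simp
      ring
    · simp only [dif_neg h, RingHom.id_apply, smul_zero]

lemma rApp_apply (D : IntervalData V a b) (j : ℤ) (v : V.obj j) :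
    rApp D j v = if h : SabIn a b j then sabElt h (sgn k j * D.lam j v) else 0 := rfl

/-- the inclusion of the interval summand -/
noncomputable def sHom (D : IntervalData V a b) : Sab k a b ⟶ V := by
  refine mkHom (Sab k a b) V (fun j => ModuleCat.ofHom (sApp D j)) ?_
  intro i j h v
  subst h
  revert v
  change ∀ v : ↥(SabObj k a b i), sApp D (i+1) (SabMap k a b i (i+1) v)
    = V.map (homOfLE (by omega : i ≤ i+1)) (sApp D i v)
  intro v
  rw [sApp_apply, sApp_apply]
  by_cases hi : SabIn a b i
  · by_cases hj : SabIn a b (i + 1)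
    · rw [if_pos hj, if_pos hi, map_smul, D.hx1 i (i+1) rfl hi hj,
        SabMap_step_coe rfl hj,
        show ((-1:k)^i * (v:k)) * sgn k (i+1) = (v:k) * ((-1:k)^i * sgn k (i+1)) by ring,
        neg_one_zpow_mul_sgn_succ]
    · rw [if_neg hj, if_pos hi, smul_zero, map_smul, D.hx2 i (i+1) rfl hi hj, smul_zero]
  · have hv : (v : k) = 0 := SabObj_coe_eq_zero k hi v
    rw [if_neg hi, smul_zero, map_zero]
    by_cases hj : SabIn a b (i + 1)
    · rw [SabMap_step_coe rfl hj, hv, mul_zero, zero_mul, zero_smul]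
    · rw [SabMap_neg hj, ZeroMemClass.coe_zero, zero_mul, zero_smul]

/-- the projection onto the interval summand -/
noncomputable def rHom (D : IntervalData V a b) : V ⟶ Sab k a b := by
  refine mkHom V (Sab k a b) (fun j => ModuleCat.ofHom (rApp D j)) ?_
  intro i j h v
  subst h
  revert v
  change ∀ v : V.obj i, rApp D (i+1) (V.map (homOfLE (by omega : i ≤ i+1)) v)
    = SabMap k a b i (i+1) (rApp D i v)
  intro v
  rw [rApp_apply, rApp_apply]
  by_cases hi : SabIn a b i
  · by_cases hj : SabIn a b (i + 1)
    · rw [dif_pos hj, dif_pos hi]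
      apply Subtype.ext
      rw [SabMap_step_coe rfl hj, sabElt_coe, sabElt_coe, D.hl2 i (i+1) rfl hi hj v, sgn_succ]
      ring
    · rw [dif_pos hi, dif_neg hj, SabMap_neg hj]
  · by_cases hj : SabIn a b (i + 1)
    · rw [dif_pos hj, dif_neg hi, map_zero]
      apply Subtype.ext
      rw [sabElt_coe, D.hl3 i (i+1) rfl hi hj v, mul_zero, ZeroMemClass.coe_zero]
    · rw [dif_neg hj, dif_neg hi, map_zero]

lemma sHom_retract (D : IntervalData V a b) : sHom D ≫ rHom D = 𝟙 (Sab k a b) := by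
  apply NatTrans.ext
  funext j
  apply ModuleCat.hom_ext
  apply LinearMap.ext
  intro v
  have key : ∀ w : ↥(SabObj k a b j), rApp D j (sApp D j w) = w := ?_
  · exact key v
  intro w
  rw [rApp_apply, sApp_apply]
  by_cases h : SabIn a b j
  · rw [dif_pos h, if_pos h]
    apply Subtype.ext
    rw [sabElt_coe, map_smul, D.hl1 j h, smul_eq_mul, mul_one,
      show sgn k j * ((w:k) * sgn k j) = (sgn k j * sgn k j) * (w:k) by ring,
      sgn_mul_self, one_mul]
  · rw [dif_neg h]
    apply Subtype.ext
    rw [ZeroMemClass.coe_zero, SabObj_coe_eq_zero k h w]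

lemma summand_of_data (D : IntervalData V a b) :
    ∃ B : SeqCat k, Nonempty (V ≅ (Sab k a b) ⨿ B) := by
  have hsr := sHom_retract D
  set s := sHom D
  set r := rHom D
  have hsnd : (𝟙 V - r ≫ s) ≫ r = 0 := by
    rw [Preadditive.sub_comp, Category.id_comp, Category.assoc, hsr, Category.comp_id, sub_self]
  refine ⟨kernel r, ⟨?_⟩⟩
  let bic : BinaryBicone (Sab k a b) (kernel r) :=
    { pt := V
      fst := r
      snd := kernel.lift r (𝟙 V - r ≫ s) hsnd
      inl := s
      inr := kernel.ι r
      inl_fst := hsr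
      inl_snd := by
        rw [← cancel_mono (kernel.ι r), Category.assoc, kernel.lift_ι, Preadditive.comp_sub,
          Category.comp_id, ← Category.assoc, hsr, Category.id_comp, sub_self, zero_comp]
      inr_fst := kernel.condition r
      inr_snd := by
        rw [← cancel_mono (kernel.ι r), Category.assoc, kernel.lift_ι, Preadditive.comp_sub,
          Category.comp_id, ← Category.assoc, kernel.condition, zero_comp, sub_zero,
          Category.id_comp]
      }
  have htotal : bic.fst ≫ bic.inl + bic.snd ≫ bic.inr = 𝟙 bic.pt := by
    show r ≫ s + kernel.lift r (𝟙 V - r ≫ s) hsnd ≫ kernel.ι r = 𝟙 V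
    rw [kernel.lift_ι]
    abel
  have hbil := isBinaryBilimitOfTotal bic htotal
  exact hbil.isColimit.coconePointUniqueUpToIso (colimit.isColimit (pair (Sab k a b) (kernel r)))

end Summand

section Indec

variable {k}

/-- coordinate of an element of a component of `Sab` -/
noncomputable def sabval {a : WithBot ℤ} {b : WithTop ℤ} {j : ℤ}
    (x : ((Sab k a b).obj j)) : k :=
  Subtype.val (show ↥(SabObj k a b j) from x)

lemma sabval_coe {a : WithBot ℤ} {b : WithTop ℤ} {j : ℤ} (w : ↥(SabObj k a b j)) :
    sabval (k := k) (a := a) (b := b) (j := j) w = (w : k) := rfl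

lemma sabval_sabElt {a : WithBot ℤ} {b : WithTop ℤ} {j : ℤ} (h : SabIn a b j) (t : k) :
    sabval (k := k) (a := a) (b := b) (j := j) (sabElt h t) = t := rfl

lemma sabval_inj {a : WithBot ℤ} {b : WithTop ℤ} {j : ℤ} {x y : ((Sab k a b).obj j)}
    (h : sabval x = sabval y) : x = y := Subtype.ext h

lemma sabval_smul {a : WithBot ℤ} {b : WithTop ℤ} {j : ℤ} (cc : k)
    (x : ((Sab k a b).obj j)) : sabval (cc • x) = cc * sabval x := rfl

lemma sab_nonzero {a : WithBot ℤ} {b : WithTop ℤ} (h : SabLE a b) :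
    ¬ IsZero (Sab k a b) := by
  obtain ⟨i₀, hin⟩ := h
  have hin' : SabIn a b i₀ := hin
  intro hz
  have h1 : 𝟙 (Sab k a b) = 0 := (IsZero.iff_id_eq_zero _).1 hz
  have happ : NatTrans.app (𝟙 (Sab k a b)) i₀ = NatTrans.app (0 : Sab k a b ⟶ Sab k a b) i₀ :=
    congrArg (fun g : Sab k a b ⟶ Sab k a b => NatTrans.app g i₀) h1
  have h3 : (sabElt hin' 1 : ↥(SabObj k a b i₀))
      = (0 : ((Sab k a b).obj i₀)) := ConcreteCategory.congr_hom happ (sabElt (k := k) hin' 1)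
  have h5 : (1 : k) = 0 := by
    have := congrArg sabval h3
    rwa [sabval_sabElt] at this
  exact one_ne_zero h5

lemma sab_idem {a : WithBot ℤ} {b : WithTop ℤ} (hle : SabLE a b)
    (f : Sab k a b ⟶ Sab k a b) (hf : f ≫ f = f) : f = 0 ∨ f = 𝟙 (Sab k a b) := by
  classical
  obtain ⟨i₀, hin₀⟩ := hle
  have hin₀' : SabIn a b i₀ := hin₀
  set c : ℤ → k := fun j => if h : SabIn a b j then sabval (f.app j (sabElt h 1)) else 0 with hc
  have scal : ∀ (j : ℤ) (h : SabIn a b j) (w : ↥(SabObj k a b j)),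
      f.app j w = sabElt h ((w : k) * c j) := by
    intro j h w
    have hw : (w : ((Sab k a b).obj j)) = ((w : k) • sabElt h 1 : ↥(SabObj k a b j)) := by
      apply sabval_inj
      exact (mul_one (w : k)).symm
    apply sabval_inj
    have hsm : f.app j (((w : k) • sabElt h 1 : ↥(SabObj k a b j)))
        = (w : k) • f.app j (sabElt h 1) := map_smul _ _ _
    conv_lhs => rw [hw, hsm]
    rw [sabval_smul, sabval_sabElt, hc]
    simp only [dif_pos h]
  have cstep : ∀ i j : ℤ, (h : i + 1 = j) → SabIn a b i → SabIn a b j → c i = c j := by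
    intro i j h hi hj
    subst h
    have ew : f.app (i+1) (SabMap k a b i (i+1) (sabElt hi 1))
        = SabMap k a b i (i+1) (f.app i (sabElt hi 1)) :=
      ConcreteCategory.congr_hom (f.naturality (homOfLE (by omega : i ≤ i + 1))) (sabElt (k := k) hi 1)
    have hm : SabMap k a b i (i+1) (sabElt hi 1) = sabElt hj ((-1 : k) ^ i) := by
      apply Subtype.ext
      rw [SabMap_step_coe rfl hj, sabElt_coe, sabElt_coe, mul_one]
    have hfi : f.app i (sabElt hi 1) = (sabElt hi ((1 : k) * c i) : ↥(SabObj k a b i)) := by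
      have := scal i hi (sabElt hi 1)
      rwa [sabElt_coe] at this
    rw [hm, scal (i+1) hj, hfi] at ew
    have e3 := congrArg sabval ew
    rw [sabval_sabElt, sabval_coe, SabMap_step_coe rfl hj, sabElt_coe, sabElt_coe] at e3
    have hne : ((-1 : k) ^ i) ≠ 0 := by
      intro hzero
      have := neg_one_zpow_mul_self (k := k) i
      rw [hzero, zero_mul] at this
      exact zero_ne_one this
    have := mul_left_cancel₀ hne e3
    rw [one_mul] at this
    exact this.symm
  have cconst : ∀ i j : ℤ, i ≤ j → SabIn a b i → SabIn a b j → c i = c j := by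
    refine int_induction_up (fun i j => SabIn a b i → SabIn a b j → c i = c j)
      (fun i _ _ => rfl) (fun i j hij ih hi hj1 => ?_)
    have hj : SabIn a b j := sabIn_convex hi hj1 hij (by omega)
    rw [ih hi hj, cstep j (j+1) rfl hj hj1]
  have cval : ∀ j, SabIn a b j → c j = c i₀ := by
    intro j hj
    rcases le_total j i₀ with h | h
    · exact cconst j i₀ h hj hin₀'
    · exact (cconst i₀ j h hin₀' hj).symm
  have hidem : ((1:k) * c i₀) * c i₀ = (1:k) * c i₀ := by
    have ew : f.app i₀ (f.app i₀ (sabElt hin₀' 1)) = f.app i₀ (sabElt hin₀' 1) :=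
      ConcreteCategory.congr_hom
        (congrArg (fun g : Sab k a b ⟶ Sab k a b => NatTrans.app g i₀) hf) (sabElt (k := k) hin₀' 1)
    have hfi : f.app i₀ (sabElt hin₀' 1) = (sabElt hin₀' ((1 : k) * c i₀) : ↥(SabObj k a b i₀)) := by
      have := scal i₀ hin₀' (sabElt hin₀' 1)
      rwa [sabElt_coe] at this
    rw [hfi, scal i₀ hin₀' (sabElt hin₀' ((1:k) * c i₀))] at ew
    have e3 := congrArg sabval ew
    rwa [sabval_sabElt, sabval_sabElt, sabElt_coe] at e3
  have hcases : c i₀ = 0 ∨ c i₀ = 1 := by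
    rcases mul_eq_zero.1 (show c i₀ * (c i₀ - 1) = 0 by linear_combination hidem) with h | h
    · exact Or.inl h
    · exact Or.inr (by linear_combination h)
  rcases hcases with h0 | h1
  · left
    apply NatTrans.ext
    funext j
    apply ModuleCat.hom_ext
    apply LinearMap.ext
    intro v
    have key : ∀ w : ↥(SabObj k a b j), f.app j w = (0 : ((Sab k a b).obj j)) := by
      intro w
      by_cases h : SabIn a b j
      · rw [scal j h w]
        apply Subtype.ext
        rw [sabElt_coe, cval j h, h0, mul_zero]
        rfl
      · have hw : (w : ((Sab k a b).obj j)) = (0 : ↥(SabObj k a b j)) :=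
          Subtype.ext (SabObj_coe_eq_zero k h w)
        rw [hw]
        exact map_zero _
    exact (key v).trans rfl
  · right
    apply NatTrans.ext
    funext j
    apply ModuleCat.hom_ext
    apply LinearMap.ext
    intro v
    have key : ∀ w : ↥(SabObj k a b j), f.app j w = (w : ((Sab k a b).obj j)) := by
      intro w
      by_cases h : SabIn a b j
      · rw [scal j h w]
        apply Subtype.ext
        rw [sabElt_coe, cval j h, h1, mul_one]
      · have hw : (w : ((Sab k a b).obj j)) = (0 : ↥(SabObj k a b j)) :=
          Subtype.ext (SabObj_coe_eq_zero k h w)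
        rw [hw]
        exact map_zero _
    exact key v

/-- `Sab` is indecomposable -/
lemma sab_indecomposable {a : WithBot ℤ} {b : WithTop ℤ} (hle : SabLE a b)
    {A B : SeqCat k} (e : Sab k a b ≅ A ⨿ B) : IsZero A ∨ IsZero B := by
  have φ : Sab k a b ≅ A ⊞ B := e.trans (biprod.isoCoprod A B).symm
  set f : Sab k a b ⟶ Sab k a b :=
    φ.hom ≫ (biprod.fst : A ⊞ B ⟶ A) ≫ (biprod.inl : A ⟶ A ⊞ B) ≫ φ.inv with hfdef
  have hidem : f ≫ f = f := by
    rw [hfdef]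
    simp only [Category.assoc, Iso.inv_hom_id_assoc]
    rw [biprod.inl_fst_assoc]
  have hconj : (biprod.fst : A ⊞ B ⟶ A) ≫ (biprod.inl : A ⟶ A ⊞ B) = φ.inv ≫ f ≫ φ.hom := by
    rw [hfdef]
    simp only [Category.assoc, Iso.inv_hom_id, Category.comp_id, Iso.inv_hom_id_assoc]
  rcases sab_idem hle f hidem with h0 | h1
  · left
    rw [IsZero.iff_id_eq_zero]
    have hz : (biprod.fst : A ⊞ B ⟶ A) ≫ (biprod.inl : A ⟶ A ⊞ B) = 0 := by
      rw [hconj, h0]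
      simp
    rw [show (𝟙 A) = (biprod.inl : A ⟶ A ⊞ B) ≫
      ((biprod.fst : A ⊞ B ⟶ A) ≫ (biprod.inl : A ⟶ A ⊞ B)) ≫ (biprod.fst : A ⊞ B ⟶ A) by simp,
      hz]
    simp
  · right
    rw [IsZero.iff_id_eq_zero]
    have hz : (biprod.fst : A ⊞ B ⟶ A) ≫ (biprod.inl : A ⟶ A ⊞ B) = 𝟙 (A ⊞ B) := by
      rw [hconj, h1]
      simp
    rw [show (𝟙 B) = (biprod.inr : B ⟶ A ⊞ B) ≫ 𝟙 (A ⊞ B) ≫ (biprod.snd : A ⊞ B ⟶ B) by simp,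
      ← hz]
    rw [show (biprod.inr : B ⟶ A ⊞ B) ≫
        ((biprod.fst : A ⊞ B ⟶ A) ≫ (biprod.inl : A ⟶ A ⊞ B)) ≫ (biprod.snd : A ⊞ B ⟶ B)
      = ((biprod.inr : B ⟶ A ⊞ B) ≫ (biprod.fst : A ⊞ B ⟶ A)) ≫
        ((biprod.inl : A ⟶ A ⊞ B) ≫ (biprod.snd : A ⊞ B ⟶ B)) by simp only [Category.assoc],
      biprod.inr_fst]
    simp

end Indec

section MainExistence

variable {k}

lemma sabIn_coe_coe {a0 b0 j : ℤ} :
    SabIn (a0 : WithBot ℤ) (b0 : WithTop ℤ) j ↔ (a0 ≤ j ∧ j ≤ b0) := by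
  unfold SabIn
  rw [WithBot.coe_le_coe, WithTop.coe_le_coe]

lemma sabIn_bot_coe {b0 j : ℤ} : SabIn (⊥ : WithBot ℤ) (b0 : WithTop ℤ) j ↔ j ≤ b0 := by
  unfold SabIn
  rw [WithTop.coe_le_coe]
  simp

lemma sabIn_coe_top {a0 j : ℤ} : SabIn (a0 : WithBot ℤ) (⊤ : WithTop ℤ) j ↔ a0 ≤ j := by
  unfold SabIn
  rw [WithBot.coe_le_coe]
  simp

lemma sabIn_bot_top {j : ℤ} : SabIn (⊥ : WithBot ℤ) (⊤ : WithTop ℤ) j := ⟨bot_le, le_top⟩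

/-- every nonzero sequence has an interval direct summand -/
lemma exists_summand (V : SeqCat k) (hV : ¬ IsZero V) :
    ∃ (a : WithBot ℤ) (b : WithTop ℤ), SabLE a b ∧
      ∃ B : SeqCat k, Nonempty (V ≅ Sab k a b ⨿ B) := by
  classical
  -- a nonzero element
  obtain ⟨i₀, v₀, hv₀⟩ : ∃ (i₀ : ℤ) (v₀ : V.obj i₀), v₀ ≠ 0 := by
    by_contra hcon
    push_neg at hcon
    apply hV
    apply Functor.isZero
    intro i
    have : Subsingleton (V.obj i) := ⟨fun x y => by rw [hcon i x, hcon i y]⟩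
    exact ModuleCat.isZero_of_subsingleton _
  by_cases hI : ∃ (p q : ℤ) (hpq : p + 1 = q) (y : V.obj p), y ≠ 0 ∧
      V.map (homOfLE (by omega : p ≤ q)) y = 0 ∧
      ∃ (i : ℤ) (hip : i ≤ p), ¬ ∃ u : V.obj i, V.map (homOfLE hip) u = y
  · -- Case I : a finite interval splits off
    obtain ⟨p, q, hpq, y, hy0, hyd, i, hip, hni⟩ := hI
    subst hpq
    set Reach : ℤ → Prop := fun m => ∃ (hmp : m ≤ p) (u : V.obj m), V.map (homOfLE hmp) u = y
      with hReachDef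
    have hReachp : Reach p := ⟨le_rfl, y, map_self V le_rfl y⟩
    have hnotReach : ¬ Reach i := by
      rintro ⟨h1, u, hu⟩
      exact hni ⟨u, hu⟩
    obtain ⟨a0, hia, hab, hRa, hnRa⟩ := exists_greatest_below Reach p i hip hReachp hnotReach
    obtain ⟨hap, z, hz⟩ := hRa
    have hmem : y ∉ LinearMap.range (V.map (homOfLE (show a0 - 1 ≤ p by omega))).hom := by
      rintro ⟨u, hu⟩
      exact hnRa ⟨by omega, u, hu⟩
    obtain ⟨φ, hφ1, hφ2⟩ := exists_functional
      (LinearMap.range (V.map (homOfLE (show a0 - 1 ≤ p by omega))).hom) y hmem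
    refine ⟨(a0 : WithBot ℤ), (p : WithTop ℤ), ⟨a0, by exact_mod_cast le_rfl, by exact_mod_cast hap⟩, ?_⟩
    refine summand_of_data ⟨
      fun j => if h : a0 ≤ j ∧ j ≤ p then V.map (homOfLE h.1) z else 0,
      fun j => if h : a0 ≤ j ∧ j ≤ p then φ.comp (V.map (homOfLE h.2)).hom else 0,
      ?_, ?_, ?_, ?_, ?_⟩
    · -- hx1
      intro i1 j1 h hi1 hj1
      beta_reduce
      subst h
      rw [dif_pos (sabIn_coe_coe.1 hi1), dif_pos (sabIn_coe_coe.1 hj1),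
        map_map V _ (by omega)]
    · -- hx2
      intro i1 j1 h hi1 hj1
      beta_reduce
      subst h
      have h1 := sabIn_coe_coe.1 hi1
      have h2 : ¬ (a0 ≤ i1 + 1 ∧ i1 + 1 ≤ p) := fun hh => hj1 (sabIn_coe_coe.2 hh)
      have hi1p : i1 = p := by omega
      subst hi1p
      rw [dif_pos h1]
      rw [show V.map (homOfLE h1.1) z = y from hz]
      exact hyd
    · -- hl1
      intro j hj
      beta_reduce
      have h1 := sabIn_coe_coe.1 hj
      rw [dif_pos h1, dif_pos h1]
      show φ (V.map (homOfLE h1.2) (V.map (homOfLE h1.1) z)) = 1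
      rw [map_map V h1.1 h1.2]
      rw [show V.map (homOfLE (h1.1.trans h1.2)) z = y from hz]
      exact hφ1
    · -- hl2
      intro i1 j1 h hi1 hj1 v
      beta_reduce
      subst h
      have h1 := sabIn_coe_coe.1 hi1
      have h2 := sabIn_coe_coe.1 hj1
      rw [dif_pos h1, dif_pos h2]
      show φ (V.map (homOfLE h2.2) (V.map (homOfLE (by omega : i1 ≤ i1 + 1)) v))
        = φ (V.map (homOfLE h1.2) v)
      rw [map_map V _ h2.2]
    · -- hl3
      intro i1 j1 h hi1 hj1 v
      beta_reduce
      subst h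
      have h2 := sabIn_coe_coe.1 hj1
      have h1 : ¬ (a0 ≤ i1 ∧ i1 ≤ p) := fun hh => hi1 (sabIn_coe_coe.2 hh)
      obtain rfl : i1 = a0 - 1 := by omega
      rw [dif_pos h2]
      show φ (V.map (homOfLE h2.2) (V.map (homOfLE (by omega : a0 - 1 ≤ a0 - 1 + 1)) v)) = 0
      rw [map_map V _ h2.2]
      exact hφ2 _ ⟨v, rfl⟩
  · -- no finite interval : all dying elements are infinitely divisible
    push_neg at hI
    have hdiv : ∀ (p q : ℤ) (hpq : p + 1 = q), ∀ y : V.obj p, y ≠ 0 →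
        V.map (homOfLE (by omega : p ≤ q)) y = 0 →
        ∀ (i : ℤ) (hip : i ≤ p), ∃ u : V.obj i, V.map (homOfLE hip) u = y := by
      intro p q h y hy0 hyd i hip
      rcases (hI p q h y hy0 hyd i hip) with ⟨u, hu⟩
      exact ⟨u, hu⟩
    by_cases hK : ∃ (p q : ℤ) (hpq : p + 1 = q) (y : V.obj p), y ≠ 0 ∧
        V.map (homOfLE (by omega : p ≤ q)) y = 0
    · -- Case IIa : an interval (-∞, p] splits off
      obtain ⟨p, q, hpq, y, hy0, hyd⟩ := hK
      subst hpq
      set Div : ∀ j : ℤ, Set (V.obj j) := fun j =>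
        {v | ∀ (i : ℤ) (hij : i ≤ j), ∃ u : V.obj i, V.map (homOfLE hij) u = v} with hDivDef
      have hyDiv : y ∈ Div p := by
        intro i hij
        rcases eq_or_lt_of_le hij with h | h
        · subst h
          exact ⟨y, map_self V le_rfl y⟩
        · exact hdiv p (p+1) rfl y hy0 hyd i hij
      have hstep : ∀ j : ℤ, j ≤ p → ∀ v ∈ Div j, ∃ u ∈ Div (j - 1),
          ∀ hij : j - 1 ≤ j, V.map (homOfLE hij) u = v := by
        intro j _ v hv
        obtain ⟨u₀, hu₀⟩ := hv (j - 1) (by omega)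
        refine ⟨u₀, ?_, fun hij => hu₀⟩
        intro i hi
        obtain ⟨w, hw⟩ := hv i (by omega)
        set κ := u₀ - V.map (homOfLE hi) w with hκdef
        have hκ : V.map (homOfLE (by omega : j - 1 ≤ j)) κ = 0 := by
          rw [hκdef, map_sub, hu₀, map_map V hi (by omega : j - 1 ≤ j), hw, sub_self]
        by_cases hκ0 : κ = 0
        · have h0 : u₀ - V.map (homOfLE hi) w = 0 := by rw [← hκdef]; exact hκ0
          exact ⟨w, (sub_eq_zero.1 h0).symm⟩
        · obtain ⟨u', hu'⟩ := hdiv (j-1) j (by omega) κ hκ0 hκ i hi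
          refine ⟨u' + w, ?_⟩
          rw [map_add, hu', hκdef]
          abel
      obtain ⟨x, hxp, hxmem, hxlink⟩ := exists_chain_down (fun j => V.obj j)
        (fun j => 0) p Div
        (fun i j u v => ∀ hij : i ≤ j, V.map (homOfLE hij) u = v) y hyDiv
        (fun j hj v hv => hstep j hj v hv)
      have xmap : ∀ i j : ℤ, i ≤ j → j ≤ p → ∀ hij : i ≤ j, V.map (homOfLE hij) (x i) = x j := by
        refine int_induction_up (fun i j => j ≤ p → ∀ hij : i ≤ j, V.map (homOfLE hij) (x i) = x j)
          (fun i _ h => map_self V h (x i)) (fun i j hij ih hjp h => ?_) 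
        · rw [← map_map V hij (by omega : j ≤ j + 1), ih (by omega) hij]
          exact hxlink j (j+1) rfl hjp (by omega)
      obtain ⟨φ, hφ1, _⟩ := exists_functional (⊥ : Submodule k (V.obj p)) y
        (by rwa [Submodule.mem_bot])
      refine ⟨(⊥ : WithBot ℤ), (p : WithTop ℤ), ⟨p, bot_le, by exact_mod_cast le_rfl⟩, ?_⟩
      refine summand_of_data ⟨x,
        fun j => if h : j ≤ p then φ.comp (V.map (homOfLE h)).hom else 0,
        ?_, ?_, ?_, ?_, ?_⟩
      · intro i1 j1 h hi1 hj1
        beta_reduce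
        subst h
        exact hxlink i1 (i1+1) rfl (sabIn_bot_coe.1 hj1) (by omega)
      · intro i1 j1 h hi1 hj1
        beta_reduce
        subst h
        have h1 := sabIn_bot_coe.1 hi1
        have h2 : ¬ (i1 + 1 ≤ p) := fun hh => hj1 (sabIn_bot_coe.2 hh)
        obtain rfl : i1 = p := by omega
        rw [hxp]
        exact hyd
      · intro j hj
        beta_reduce
        have h1 := sabIn_bot_coe.1 hj
        rw [dif_pos h1]
        show φ (V.map (homOfLE h1) (x j)) = 1
        rw [xmap j p h1 le_rfl h1, hxp]
        exact hφ1
      · intro i1 j1 h hi1 hj1 v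
        beta_reduce
        subst h
        have h1 := sabIn_bot_coe.1 hi1
        have h2 := sabIn_bot_coe.1 hj1
        rw [dif_pos h1, dif_pos h2]
        show φ (V.map (homOfLE h2) (V.map (homOfLE (by omega : i1 ≤ i1 + 1)) v))
          = φ (V.map (homOfLE h1) v)
        rw [map_map V _ h2]
      · intro i1 j1 h hi1 hj1 v
        beta_reduce
        subst h
        have h2 := sabIn_bot_coe.1 hj1
        exact absurd (sabIn_bot_coe.2 (by omega)) hi1
    · -- Case IIb : all maps are injective
      push_neg at hK
      have hinj_step : ∀ i j : ℤ, (e : i + 1 = j) →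
          Function.Injective (V.map (homOfLE (by omega : i ≤ j))) := by
        intro i j e
        subst e
        intro u v huv
        by_contra hne
        have hsub : u - v ≠ 0 := sub_ne_zero.2 hne
        have hd : V.map (homOfLE (by omega : i ≤ i + 1)) (u - v) = 0 := by
          rw [map_sub, huv, sub_self]
        exact (hK i (i+1) rfl (u - v) hsub) hd
      have hinj := map_injective V hinj_step
      -- the direct limit
      set G : ℤ → Type _ := fun j => V.obj j with hGdef
      set F : ∀ i j : ℤ, i ≤ j → G i →ₗ[k] G j := fun i j h => (V.map (homOfLE h)).hom with hFdef
      haveI : DirectedSystem G (fun i j h => F i j h) := by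
        constructor
        · intro i xx
          exact map_self V le_rfl xx
        · intro i1 j1 k1 hij hjk xx
          exact map_map V hij hjk xx
      set C := Module.DirectLimit G F with hCdef
      set of : ∀ j : ℤ, G j →ₗ[k] C := fun j => Module.DirectLimit.of k ℤ G F j with hofdef
      have hof_inj : ∀ (j : ℤ) (v : G j), of j v = 0 → v = 0 := by
        intro j v hv
        obtain ⟨l, hjl, hl⟩ := Module.DirectLimit.of.zero_exact hv
        have : F j l hjl v = F j l hjl 0 := by rw [hl, map_zero]
        exact hinj j l hjl this
      by_cases hS : ∃ (a0 : ℤ) (xx : V.obj a0), of a0 xx ∉ LinearMap.range (of (a0 - 1))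
      · -- Case IIb1 : an interval [a0, ∞) splits off
        obtain ⟨a0, xx, hxx⟩ := hS
        obtain ⟨Λ, hΛ1, hΛ2⟩ := exists_functional (LinearMap.range (of (a0 - 1))) (of a0 xx) hxx
        refine ⟨(a0 : WithBot ℤ), (⊤ : WithTop ℤ), ⟨a0, by exact_mod_cast le_rfl, le_top⟩, ?_⟩
        refine summand_of_data ⟨
          fun j => if h : a0 ≤ j then V.map (homOfLE h) xx else 0,
          fun j => Λ.comp (of j),
          ?_, ?_, ?_, ?_, ?_⟩
        · intro i1 j1 h hi1 hj1
          beta_reduce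
          subst h
          rw [dif_pos (sabIn_coe_top.1 hi1), dif_pos (sabIn_coe_top.1 hj1),
            map_map V _ (by omega)]
        · intro i1 j1 h hi1 hj1
          beta_reduce
          subst h
          exact absurd (sabIn_coe_top.2 (by have := sabIn_coe_top.1 hi1; omega)) hj1
        · intro j hj
          beta_reduce
          have h1 := sabIn_coe_top.1 hj
          rw [dif_pos h1]
          show Λ (of j (F a0 j h1 xx)) = 1
          rw [Module.DirectLimit.of_f]
          exact hΛ1
        · intro i1 j1 h hi1 hj1 v
          beta_reduce
          subst h
          show Λ (of (i1+1) (F i1 (i1+1) (by omega) v)) = Λ (of i1 v)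
          rw [Module.DirectLimit.of_f]
        · intro i1 j1 h hi1 hj1 v
          beta_reduce
          subst h
          have h2 := sabIn_coe_top.1 hj1
          have h1 : ¬ (a0 ≤ i1) := fun hh => hi1 (sabIn_coe_top.2 hh)
          obtain rfl : i1 = a0 - 1 := by omega
          show Λ (of (a0 - 1 + 1) (F (a0-1) (a0-1+1) (by omega) v)) = 0
          rw [Module.DirectLimit.of_f]
          exact hΛ2 _ ⟨v, rfl⟩
      · -- Case IIb2 : all maps are bijective, a two-sided infinite interval splits off
        push_neg at hS
        have hsurj_step : ∀ i j : ℤ, (e : i + 1 = j) →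
            Function.Surjective (V.map (homOfLE (by omega : i ≤ j))) := by
          intro i j e
          subst e
          intro w
          have hmem := hS (i+1) w
          rw [show (i + 1) - 1 = i by omega] at hmem
          obtain ⟨u, hu⟩ := hmem
          refine ⟨u, sub_eq_zero.1 (hof_inj (i+1)
            (V.map (homOfLE (by omega : i ≤ i + 1)) u - w) ?_)⟩
          rw [map_sub]
          rw [show of (i+1) (V.map (homOfLE (by omega : i ≤ i + 1)) u)
            = of i u from Module.DirectLimit.of_f]
          rw [hu, sub_self]
        have hsurj := map_surjective V hsurj_step
        obtain ⟨Λ, hΛ1, _⟩ := exists_functional (⊥ : Submodule k C) (of i₀ v₀)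
          (by rw [Submodule.mem_bot]; intro hz; exact hv₀ (hof_inj i₀ v₀ hz))
        refine ⟨(⊥ : WithBot ℤ), (⊤ : WithTop ℤ), ⟨0, bot_le, le_top⟩, ?_⟩
        set x : ∀ j : ℤ, V.obj j := fun j => if h : i₀ ≤ j then V.map (homOfLE h) v₀
          else Function.surjInv (hsurj j i₀ (by omega)) v₀ with hxdef
        have xv : ∀ (j : ℤ) (h : j ≤ i₀), V.map (homOfLE h) (x j) = v₀ := by
          intro j h
          rw [hxdef]
          by_cases h1 : i₀ ≤ j
          · simp only [dif_pos h1]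
            rw [map_map V h1 h]
            exact map_self V _ v₀
          · simp only [dif_neg h1]
            exact Function.surjInv_eq _ v₀
        refine summand_of_data ⟨x, fun j => Λ.comp (of j), ?_, ?_, ?_, ?_, ?_⟩
        · intro i1 j1 h hi1 hj1
          beta_reduce
          subst h
          by_cases h1 : i₀ ≤ i1
          · rw [hxdef]
            simp only [dif_pos h1, dif_pos (by omega : i₀ ≤ i1 + 1)]
            rw [map_map V h1 (by omega)]
          · apply hinj (i1+1) i₀ (by omega)
            rw [map_map V (by omega : i1 ≤ i1 + 1) (by omega : i1 + 1 ≤ i₀)]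
            rw [xv i1 (by omega), xv (i1+1) (by omega)]
        · intro i1 j1 h hi1 hj1
          beta_reduce
          exact absurd sabIn_bot_top hj1
        · intro j hj
          beta_reduce
          show Λ (of j (x j)) = 1
          by_cases h1 : i₀ ≤ j
          · rw [hxdef]
            simp only [dif_pos h1]
            rw [show of j (V.map (homOfLE h1) v₀) = of j (F i₀ j h1 v₀) from rfl,
              Module.DirectLimit.of_f]
            exact hΛ1
          · rw [show of j (x j) = of i₀ (F j i₀ (by omega) (x j)) from
              (Module.DirectLimit.of_f).symm]
            rw [show F j i₀ (by omega : j ≤ i₀) (x j) = v₀ from xv j (by omega)]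
            exact hΛ1
        · intro i1 j1 h hi1 hj1 v
          beta_reduce
          subst h
          show Λ (of (i1+1) (F i1 (i1+1) (by omega) v)) = Λ (of i1 v)
          rw [Module.DirectLimit.of_f]
        · intro i1 j1 h hi1 hj1 v
          beta_reduce
          exact absurd sabIn_bot_top hi1

end MainExistence

section Final

variable {k}

/-- characterization of indecomposable sequences -/
lemma indec_iff (V : SeqCat k) : IndecomposableSeq k V ↔
    ∃ (a : WithBot ℤ) (b : WithTop ℤ), SabLE a b ∧ Nonempty (V ≅ Sab k a b) := by
  constructor
  · rintro ⟨hnz, hdec⟩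
    obtain ⟨a, b, hle, B, ⟨e⟩⟩ := exists_summand V hnz
    rcases hdec (Sab k a b) B ⟨e⟩ with hA | hB
    · exact absurd hA (sab_nonzero hle)
    · exact ⟨a, b, hle, ⟨e.trans ((coprod.mapIso (Iso.refl _) hB.isoZero).trans
        (coprodZeroIso _))⟩⟩
  · rintro ⟨a, b, hle, ⟨e⟩⟩
    refine ⟨fun hz => sab_nonzero hle (hz.of_iso e.symm), fun A B h => ?_⟩
    obtain ⟨e2⟩ := h
    exact sab_indecomposable hle (e.symm.trans e2)

end Final

end Part2

/-- An object `V` of `S` is indecomposable if and only if `V ≅ S_{a,b}` for some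
`a ∈ ℤ ∪ {−∞}` and `b ∈ ℤ ∪ {∞}` with `a ≤ b`; and `V` is completely decomposable if
and only if `V` is isomorphic to a coproduct of objects of the form `S_{a,b}`. -/
theorem indecomposable_and_completely_decomposable_char (V : SeqCat k) :
    (IndecomposableSeq k V ↔
      ∃ (a : WithBot ℤ) (b : WithTop ℤ), SabLE a b ∧ Nonempty (V ≅ Sab k a b)) ∧
    (CompletelyDecomposableSeq k V ↔
      ∃ (ι : Type) (a : ι → WithBot ℤ) (b : ι → WithTop ℤ),
        (∀ j, SabLE (a j) (b j)) ∧
        Nonempty (V ≅ ∐ fun j : ι => Sab k (a j) (b j))) := by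
  constructor
  · exact indec_iff V
  · constructor
    · rintro ⟨ι, W, hind, ⟨e⟩⟩
      choose a b hle hiso using fun j => (indec_iff (W j)).1 (hind j)
      exact ⟨ι, a, b, hle, ⟨e.trans (Sigma.mapIso (fun j => (hiso j).some))⟩⟩
    · rintro ⟨ι, a, b, hle, ⟨e⟩⟩
      exact ⟨ι, fun j => Sab k (a j) (b j),
        fun j => (indec_iff _).2 ⟨a j, b j, hle j, ⟨Iso.refl _⟩⟩, ⟨e⟩⟩
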